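/- In the duality gap example (c = 0 below the diagonal, 1 on the diagonal, ∞ above, on [0,1]² with Lebesgue marginals), the relaxed primal value P^rel = lim_{ε→0} inf{∫ c dπ : ‖π‖ ≥ 1−ε, p_X(π) ≤ λ, p_Y(π) ≤ λ} equals 0. In particular, for each ε > 0, the pushforward of λ restricted to [ε,1] under the map x ↦ (x, x−ε) is a partial transport plan of mass 1−ε with zero cost. -/

import Mathlib

open MeasureTheory ENNReal

/-- Lebesgue measure on `[0,1]`. -/
noncomputable def lam : Measure ℝ := volume.restrict (Set.Icc 0 1)

/-- The cost function of the duality gap example: `0` below the diagonal,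
`1` on the diagonal, `∞` above the diagonal. -/
noncomputable def cGap : ℝ × ℝ → ℝ≥0∞ :=
  fun p => if p.2 < p.1 then 0 else if p.1 = p.2 then 1 else ⊤

lemma cGap_measurable : Measurable cGap := by
  unfold cGap
  refine Measurable.ite (measurableSet_lt measurable_snd measurable_fst) measurable_const ?_
  exact Measurable.ite (measurableSet_eq_fun measurable_fst measurable_snd)
    measurable_const measurable_const

lemma plan_facts (ε : ℝ) (hε : 0 < ε) (hε1 : ε ≤ 1) :
    ((volume.restrict (Set.Icc ε 1)).map (fun x => (x, x - ε))) Set.univ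
        = ENNReal.ofReal (1 - ε) ∧
    ((volume.restrict (Set.Icc ε 1)).map (fun x => (x, x - ε))).fst ≤ lam ∧
    ((volume.restrict (Set.Icc ε 1)).map (fun x => (x, x - ε))).snd ≤ lam ∧
    ∫⁻ p, cGap p ∂((volume.restrict (Set.Icc ε 1)).map (fun x => (x, x - ε))) = 0 := by
  have hf : Measurable (fun x : ℝ => (x, x - ε)) :=
    measurable_id.prodMk (measurable_id.sub measurable_const)
  refine ⟨?_, ?_, ?_, ?_⟩
  · rw [Measure.map_apply hf MeasurableSet.univ]
    simp [Real.volume_Icc, hε1]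
  · rw [Measure.fst, Measure.map_map measurable_fst hf]
    have : (Prod.fst ∘ fun x : ℝ => (x, x - ε)) = id := rfl
    rw [this, Measure.map_id]
    exact Measure.restrict_mono (Set.Icc_subset_Icc hε.le le_rfl) le_rfl
  · rw [Measure.snd, Measure.map_map measurable_snd hf]
    have h1 : (Prod.snd ∘ fun x : ℝ => (x, x - ε)) = (· - ε) := rfl
    rw [h1]
    have hmp : MeasurePreserving (· - ε) (volume : Measure ℝ) volume :=
      measurePreserving_sub_right volume ε
    have hpre : (· - ε) ⁻¹' Set.Icc 0 (1 - ε) = Set.Icc ε 1 := by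
      ext x
      simp only [Set.mem_preimage, Set.mem_Icc]
      constructor <;> intro h <;> constructor <;> linarith [h.1, h.2]
    have := (hmp.restrict_preimage (s := Set.Icc 0 (1 - ε)) measurableSet_Icc).map_eq
    rw [hpre] at this
    rw [this]
    exact Measure.restrict_mono (Set.Icc_subset_Icc le_rfl (by linarith)) le_rfl
  · rw [lintegral_map cGap_measurable hf]
    have : ∀ x, cGap (x, x - ε) = 0 := by
      intro x; simp [cGap, show x - ε < x by linarith]
    simp [this]

theorem stmt7 :
    (⨆ (ε : ℝ) (_ : 0 < ε),
      sInf {r : ℝ≥0∞ | ∃ π : Measure (ℝ × ℝ),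
        ENNReal.ofReal (1 - ε) ≤ π Set.univ ∧ π.fst ≤ lam ∧ π.snd ≤ lam ∧
        r = ∫⁻ p, cGap p ∂π}) = 0 ∧
    ∀ ε : ℝ, 0 < ε → ε ≤ 1 →
      ((volume.restrict (Set.Icc ε 1)).map (fun x => (x, x - ε))) Set.univ
          = ENNReal.ofReal (1 - ε) ∧
      ((volume.restrict (Set.Icc ε 1)).map (fun x => (x, x - ε))).fst ≤ lam ∧
      ((volume.restrict (Set.Icc ε 1)).map (fun x => (x, x - ε))).snd ≤ lam ∧
      ∫⁻ p, cGap p ∂((volume.restrict (Set.Icc ε 1)).map (fun x => (x, x - ε))) = 0 := by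
  constructor
  · refine le_antisymm (iSup_le fun ε => iSup_le fun hε => ?_) zero_le
    refine sInf_le_of_le (b := 0) ?_ le_rfl
    by_cases hε1 : ε ≤ 1
    · obtain ⟨h1, h2, h3, h4⟩ := plan_facts ε hε hε1
      exact ⟨_, h1.ge, h2, h3, h4.symm⟩
    · refine ⟨0, ?_, ?_, ?_, by simp⟩
      · simp [ENNReal.ofReal_eq_zero.mpr (by linarith : 1 - ε ≤ 0)]
      · exact (Measure.fst_zero).le.trans (Measure.zero_le lam)
      · exact (Measure.snd_zero).le.trans (Measure.zero_le lam)
  · exact fun ε hε hε1 => plan_facts ε hε hε1
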